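/- Let A = R[x,y]/(xy - t^l), and for i+j = i'+j' = l with i+i' > l define the map E_{i,j} ⊗_A E_{i',j'} → E_{\overline{i+i'},\overline{j+j'}} on generators by ζ₁⊗ξ₁ ↦ x ν₁, ζ₁⊗ξ₂ ↦ t^{j'} ν₁, ζ₂⊗ξ₁ ↦ t^{j} ν₁, ζ₂⊗ξ₂ ↦ ν₂. Then this assignment is compatible with the defining relations of E_{i,j}, E_{i',j'}, and E_{\overline{i+i'},\overline{j+j'}}, and hence defines an A-module homomorphism. -/

import Mathlib

set_option synthInstance.maxHeartbeats 1000000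
set_option maxHeartbeats 1000000

open MvPolynomial TensorProduct

namespace stmt12

variable (R : Type*) [CommRing R] (t : R) (l : ℕ)

/-- `A = R[x,y]/(xy - t^l)`, with `x = X 0`, `y = X 1`. -/
noncomputable abbrev A := MvPolynomial (Fin 2) R ⧸
  Ideal.span {(X 0 * X 1 - C (t ^ l) : MvPolynomial (Fin 2) R)}

noncomputable def x : A R t l := Ideal.Quotient.mk _ (X 0)
noncomputable def y : A R t l := Ideal.Quotient.mk _ (X 1)
noncomputable def tA : A R t l := Ideal.Quotient.mk _ (C t)

/-- `E a b` is the `A`-module with two generators and relations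
`t^b·(first) = x·(second)` and `t^a·(second) = y·(first)`. -/
noncomputable def E (a b : ℕ) :=
  (A R t l × A R t l) ⧸
    (Submodule.span (A R t l) {((tA R t l ^ b, -(x R t l)) : A R t l × A R t l),
      ((y R t l, -(tA R t l ^ a)) : A R t l × A R t l)})

noncomputable instance (a b : ℕ) : AddCommGroup (E R t l a b) :=
  Submodule.Quotient.addCommGroup _

noncomputable instance (a b : ℕ) : Module (A R t l) (E R t l a b) :=
  Submodule.Quotient.module _

/-- first generator of `E a b` -/
noncomputable def gen₁ (a b : ℕ) : E R t l a b := Submodule.Quotient.mk (1, 0)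
/-- second generator of `E a b` -/
noncomputable def gen₂ (a b : ℕ) : E R t l a b := Submodule.Quotient.mk (0, 1)

lemma xy_eq : x R t l * y R t l = tA R t l ^ l := by
  have h : (Ideal.Quotient.mk (Ideal.span {(X 0 * X 1 - C (t ^ l) : MvPolynomial (Fin 2) R)})
      (X 0 * X 1 - C (t ^ l))) = 0 :=
    Ideal.Quotient.eq_zero_iff_mem.mpr (Ideal.subset_span rfl)
  have h2 : x R t l * y R t l - tA R t l ^ l = 0 := by
    simpa [x, y, tA, map_sub, map_mul, map_pow, C_pow] using h
  exact sub_eq_zero.mp h2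

noncomputable def rels (a b : ℕ) : Submodule (A R t l) (A R t l × A R t l) :=
  Submodule.span (A R t l) {((tA R t l ^ b, -(x R t l)) : A R t l × A R t l),
      ((y R t l, -(tA R t l ^ a)) : A R t l × A R t l)}

lemma mk_pair (a b : ℕ) (c d : A R t l) :
    (Submodule.Quotient.mk (c, d) : E R t l a b) = c • gen₁ R t l a b + d • gen₂ R t l a b := by
  unfold gen₁ gen₂
  show @Eq ((A R t l × A R t l) ⧸ rels R t l a b) (Submodule.Quotient.mk (c, d))
    (c • Submodule.Quotient.mk (p := rels R t l a b) (1, 0) +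
      d • Submodule.Quotient.mk (p := rels R t l a b) (0, 1))
  rw [← Submodule.Quotient.mk_smul, ← Submodule.Quotient.mk_smul, ← Submodule.Quotient.mk_add]
  congr 1
  simp [Prod.ext_iff]

noncomputable def β (jj jj' : ℕ) :
    (A R t l × A R t l) →ₗ[A R t l] (A R t l × A R t l) →ₗ[A R t l] (A R t l × A R t l) :=
  LinearMap.mk₂ (A R t l)
    (fun p q => (p.1 * q.1 * x R t l + p.1 * q.2 * tA R t l ^ jj' + p.2 * q.1 * tA R t l ^ jj,
      p.2 * q.2))
    (fun m m' q => by ext <;> (dsimp; ring))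
    (fun c m q => by ext <;> (dsimp [smul_eq_mul]; ring))
    (fun m q q' => by ext <;> (dsimp; ring))
    (fun c m q => by ext <;> (dsimp [smul_eq_mul]; ring))

/-- for `i+j = i'+j' = l` and `i+i' > l`, the assignment
`ζ₁⊗ξ₁ ↦ x ν₁`, `ζ₁⊗ξ₂ ↦ t^{j'} ν₁`, `ζ₂⊗ξ₁ ↦ t^{j} ν₁`, `ζ₂⊗ξ₂ ↦ ν₂` is compatible
with the defining relations, i.e. it defines an `A`-module homomorphism
`E_{i,j} ⊗_A E_{i',j'} → E_{i+i'-l, j+j'}` (note `\overline{i+i'} = i+i'-l` and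
`\overline{j+j'} = j+j'`). -/
theorem stmt12 (i j i' j' : ℕ) (hi : 0 < i) (hj : 0 < j) (hi' : 0 < i') (hj' : 0 < j')
    (hij : i + j = l) (hij' : i' + j' = l) (h : i + i' > l) :
    ∃ f : (E R t l i j) ⊗[A R t l] (E R t l i' j') →ₗ[A R t l] E R t l (i + i' - l) (j + j'),
      f (gen₁ R t l i j ⊗ₜ gen₁ R t l i' j') = x R t l • gen₁ R t l (i + i' - l) (j + j') ∧
      f (gen₁ R t l i j ⊗ₜ gen₂ R t l i' j') = tA R t l ^ j' • gen₁ R t l (i + i' - l) (j + j') ∧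
      f (gen₂ R t l i j ⊗ₜ gen₁ R t l i' j') = tA R t l ^ j • gen₁ R t l (i + i' - l) (j + j') ∧
      f (gen₂ R t l i j ⊗ₜ gen₂ R t l i' j') = gen₂ R t l (i + i' - l) (j + j') := by
  have hxy := xy_eq R t l
  have hpow1 : tA R t l ^ i * tA R t l ^ j = tA R t l ^ l := by rw [← pow_add, hij]
  have hpow2 : tA R t l ^ i' * tA R t l ^ j' = tA R t l ^ l := by rw [← pow_add, hij']
  have hpa : tA R t l ^ j' * tA R t l ^ (i + i' - l) = tA R t l ^ i := by
    rw [← pow_add]; congr 1; omega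
  have hpa' : tA R t l ^ j * tA R t l ^ (i + i' - l) = tA R t l ^ i' := by
    rw [← pow_add]; congr 1; omega
  have mem1 : ((tA R t l ^ (j + j'), -(x R t l)) : A R t l × A R t l)
      ∈ rels R t l (i + i' - l) (j + j') := Submodule.subset_span (by left; rfl)
  have mem2 : ((y R t l, -(tA R t l ^ (i + i' - l))) : A R t l × A R t l)
      ∈ rels R t l (i + i' - l) (j + j') := Submodule.subset_span (by right; rfl)
  let Φ : (A R t l × A R t l) →ₗ[A R t l] (A R t l × A R t l) →ₗ[A R t l]
      E R t l (i + i' - l) (j + j') :=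
    LinearMap.compr₂ (β R t l j j') (rels R t l (i + i' - l) (j + j')).mkQ
  have hΦapp : ∀ p q : A R t l × A R t l,
      Φ p q = Submodule.Quotient.mk (β R t l j j' p q) := fun _ _ => rfl
  have z1 : ∀ q : A R t l × A R t l, Φ (tA R t l ^ j, -(x R t l)) q = 0 := by
    intro q
    rw [hΦapp]
    change (Submodule.Quotient.mk _ : (A R t l × A R t l) ⧸ rels R t l (i + i' - l) (j + j')) = 0
    rw [Submodule.Quotient.mk_eq_zero]
    have hb : β R t l j j' (tA R t l ^ j, -(x R t l)) q
        = q.2 • ((tA R t l ^ (j + j'), -(x R t l)) : A R t l × A R t l) := by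
      simp only [β, LinearMap.mk₂_apply, Prod.smul_mk, smul_eq_mul, Prod.mk.injEq]
      constructor <;> ring
    rw [hb]
    exact Submodule.smul_mem _ _ mem1
  have z2 : ∀ q : A R t l × A R t l, Φ (y R t l, -(tA R t l ^ i)) q = 0 := by
    intro q
    rw [hΦapp]
    change (Submodule.Quotient.mk _ : (A R t l × A R t l) ⧸ rels R t l (i + i' - l) (j + j')) = 0
    rw [Submodule.Quotient.mk_eq_zero]
    have hb : β R t l j j' (y R t l, -(tA R t l ^ i)) q
        = (q.2 * tA R t l ^ j') •
          ((y R t l, -(tA R t l ^ (i + i' - l))) : A R t l × A R t l) := by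
      simp only [β, LinearMap.mk₂_apply, Prod.smul_mk, smul_eq_mul, Prod.mk.injEq]
      constructor
      · linear_combination q.1 * hxy - q.1 * hpow1
      · linear_combination q.2 * hpa
    rw [hb]
    exact Submodule.smul_mem _ _ mem2
  have z3 : ∀ p : A R t l × A R t l, Φ p (tA R t l ^ j', -(x R t l)) = 0 := by
    intro p
    rw [hΦapp]
    change (Submodule.Quotient.mk _ : (A R t l × A R t l) ⧸ rels R t l (i + i' - l) (j + j')) = 0
    rw [Submodule.Quotient.mk_eq_zero]
    have hb : β R t l j j' p (tA R t l ^ j', -(x R t l))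
        = p.2 • ((tA R t l ^ (j + j'), -(x R t l)) : A R t l × A R t l) := by
      simp only [β, LinearMap.mk₂_apply, Prod.smul_mk, smul_eq_mul, Prod.mk.injEq]
      constructor
      · ring
      · trivial
    rw [hb]
    exact Submodule.smul_mem _ _ mem1
  have z4 : ∀ p : A R t l × A R t l, Φ p (y R t l, -(tA R t l ^ i')) = 0 := by
    intro p
    rw [hΦapp]
    change (Submodule.Quotient.mk _ : (A R t l × A R t l) ⧸ rels R t l (i + i' - l) (j + j')) = 0
    rw [Submodule.Quotient.mk_eq_zero]
    have hb : β R t l j j' p (y R t l, -(tA R t l ^ i'))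
        = (p.2 * tA R t l ^ j) •
          ((y R t l, -(tA R t l ^ (i + i' - l))) : A R t l × A R t l) := by
      simp only [β, LinearMap.mk₂_apply, Prod.smul_mk, smul_eq_mul, Prod.mk.injEq]
      constructor
      · linear_combination p.1 * hxy - p.1 * hpow2
      · linear_combination p.2 * hpa'
    rw [hb]
    exact Submodule.smul_mem _ _ mem2
  have hS : Submodule.span (A R t l) {((tA R t l ^ j, -(x R t l)) : A R t l × A R t l),
      ((y R t l, -(tA R t l ^ i)) : A R t l × A R t l)} ≤ LinearMap.ker Φ := by
    rw [Submodule.span_le]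
    intro s hs
    simp only [Set.mem_insert_iff, Set.mem_singleton_iff] at hs
    rw [SetLike.mem_coe, LinearMap.mem_ker]
    rcases hs with rfl | rfl
    · exact LinearMap.ext z1
    · exact LinearMap.ext z2
  let Φ₁ : E R t l i j →ₗ[A R t l]
      ((A R t l × A R t l) →ₗ[A R t l] E R t l (i + i' - l) (j + j')) :=
    Submodule.liftQ _ Φ hS
  have hS' : Submodule.span (A R t l) {((tA R t l ^ j', -(x R t l)) : A R t l × A R t l),
      ((y R t l, -(tA R t l ^ i')) : A R t l × A R t l)} ≤ LinearMap.ker Φ₁.flip := by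
    rw [Submodule.span_le]
    intro s hs
    simp only [Set.mem_insert_iff, Set.mem_singleton_iff] at hs
    rw [SetLike.mem_coe, LinearMap.mem_ker]
    apply LinearMap.ext
    intro e
    obtain ⟨p, rfl⟩ := Submodule.Quotient.mk_surjective _ e
    rcases hs with rfl | rfl
    · exact z3 p
    · exact z4 p
  let Φ₂ : E R t l i' j' →ₗ[A R t l]
      (E R t l i j →ₗ[A R t l] E R t l (i + i' - l) (j + j')) :=
    Submodule.liftQ _ Φ₁.flip hS'
  refine ⟨TensorProduct.lift Φ₂.flip, ?_, ?_, ?_, ?_⟩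
  · show @Eq (E R t l (i + i' - l) (j + j')) (Submodule.Quotient.mk (β R t l j j' (1, 0) (1, 0))) _
    have hb : β R t l j j' (1, 0) (1, 0) = (x R t l, 0) := by simp [β]
    rw [hb, mk_pair]; simp; exact @zero_smul (A R t l) (E R t l (i + i' - l) (j + j')) _ _ _ _
  · show @Eq (E R t l (i + i' - l) (j + j')) (Submodule.Quotient.mk (β R t l j j' (1, 0) (0, 1))) _
    have hb : β R t l j j' (1, 0) (0, 1) = (tA R t l ^ j', 0) := by simp [β]
    rw [hb, mk_pair]; simp; exact @zero_smul (A R t l) (E R t l (i + i' - l) (j + j')) _ _ _ _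
  · show @Eq (E R t l (i + i' - l) (j + j')) (Submodule.Quotient.mk (β R t l j j' (0, 1) (1, 0))) _
    have hb : β R t l j j' (0, 1) (1, 0) = (tA R t l ^ j, 0) := by simp [β]
    rw [hb, mk_pair]; simp; exact @zero_smul (A R t l) (E R t l (i + i' - l) (j + j')) _ _ _ _
  · show @Eq (E R t l (i + i' - l) (j + j')) (Submodule.Quotient.mk (β R t l j j' (0, 1) (0, 1))) _
    have hb : β R t l j j' (0, 1) (0, 1) = (0, 1) := by simp [β]
    rw [hb, mk_pair]; simp; exact @zero_smul (A R t l) (E R t l (i + i' - l) (j + j')) _ _ _ _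

end stmt12
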